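/- Let R be a commutative Noetherian ring and p : F → M a morphism of R-modules where F is Matlis reflexive. Then p is a flat cover if and only if the Matlis dual p^∨ : M^∨ → F^∨ is an injective envelope. -/

import Mathlib

universe u

variable (R : Type u) [CommRing R]

/-- A morphism `f : F → M` with `F` flat is a flat precover if every morphism from a
flat module to `M` factors through `f`. -/
def IsFlatPrecover {F M : Type u} [AddCommGroup F] [AddCommGroup M] [Module R F]
    [Module R M] (f : F →ₗ[R] M) : Prop :=
  Module.Flat R F ∧
    ∀ (F' : Type u) [AddCommGroup F'] [Module R F'], Module.Flat R F' →
      ∀ g : F' →ₗ[R] M, ∃ h : F' →ₗ[R] F, f ∘ₗ h = g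

/-- A flat precover `f : F → M` is a flat cover if every `h : F → F` with `f ∘ h = f`
is an automorphism. -/
def IsFlatCover {F M : Type u} [AddCommGroup F] [AddCommGroup M] [Module R F]
    [Module R M] (f : F →ₗ[R] M) : Prop :=
  IsFlatPrecover R f ∧ ∀ h : F →ₗ[R] F, f ∘ₗ h = f → Function.Bijective h

/-- A morphism `i : M → E` is an injective envelope if `E` is injective, `i` is
injective, and the image of `i` is an essential submodule of `E`. -/
def IsInjectiveEnvelope {M E : Type u} [AddCommGroup M] [AddCommGroup E] [Module R M]
    [Module R E] (i : M →ₗ[R] E) : Prop :=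
  Module.Injective R E ∧ Function.Injective i ∧
    ∀ N : Submodule R E, N ≠ ⊥ → N ⊓ LinearMap.range i ≠ ⊥

/-- An injective cogenerator is an injective module `E` such that `Hom(N, E) ≠ 0`
for every nonzero module `N`. -/
def IsInjectiveCogenerator (E : Type u) [AddCommGroup E] [Module R E] : Prop :=
  Module.Injective R E ∧
    ∀ (N : Type u) [AddCommGroup N] [Module R N], (∃ x : N, x ≠ 0) →
      ∃ g : N →ₗ[R] E, g ≠ 0

/-- Given a module `D` (to be thought of as `⊕ E(R/𝔫)`, the direct sum of injective
envelopes of the residue fields of all maximal ideals, so that `Hom_R(-, D)` is the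
Matlis dual), a module `M` is Matlis reflexive if the evaluation map
`M → Hom_R(Hom_R(M, D), D)` is an isomorphism. -/
def IsMatlisReflexive (D : Type u) [AddCommGroup D] [Module R D]
    (M : Type u) [AddCommGroup M] [Module R M] : Prop :=
  Function.Bijective (LinearMap.applyₗ : M →ₗ[R] ((M →ₗ[R] D) →ₗ[R] D))

open DirectSum

/-! ### Auxiliary lemmas on duality with respect to an injective cogenerator -/

namespace MatlisAux

open LinearMap TensorProduct

/-- The pointwise cogenerator (point-separating) property for `D`. -/
def SepPoints (R : Type u) [CommRing R] (D : Type u) [AddCommGroup D] [Module R D] : Prop :=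
  ∀ (N : Type u) [AddCommGroup N] [Module R N] (x : N), x ≠ 0 → ∃ φ : N →ₗ[R] D, φ x ≠ 0

variable {R : Type u} [CommRing R] {D : Type u} [AddCommGroup D] [Module R D]
variable {A B : Type u} [AddCommGroup A] [AddCommGroup B] [Module R A] [Module R B]

theorem eval_inj (hcog : SepPoints R D) :
    Function.Injective (LinearMap.applyₗ : A →ₗ[R] ((A →ₗ[R] D) →ₗ[R] D)) := by
  intro x y h
  by_contra hne
  obtain ⟨φ, hφ⟩ := hcog A (x - y) (sub_ne_zero.mpr hne)
  apply hφ
  have := congrArg (fun t => t φ) h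
  simp only [LinearMap.applyₗ_apply_apply] at this
  simp [map_sub, this]

theorem dual_surj (hDi : Module.Injective R D) (f : A →ₗ[R] B) (hf : Function.Injective f) :
    Function.Surjective (LinearMap.lcomp R D f) := by
  intro φ
  obtain ⟨ψ, hψ⟩ := hDi.out f hf φ
  exact ⟨ψ, LinearMap.ext hψ⟩

theorem dual_inj (f : A →ₗ[R] B) (hf : Function.Surjective f) :
    Function.Injective (LinearMap.lcomp R D f) := by
  intro φ ψ h
  ext b
  obtain ⟨a, rfl⟩ := hf b
  exact congrArg (fun t => t a) h

theorem inj_of_dual_surj (hcog : SepPoints R D) (f : A →ₗ[R] B)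
    (hf : Function.Surjective (LinearMap.lcomp R D f)) : Function.Injective f := by
  rw [← LinearMap.ker_eq_bot]
  by_contra hne
  obtain ⟨x, hxk, hx0⟩ := Submodule.exists_mem_ne_zero_of_ne_bot hne
  obtain ⟨φ, hφ⟩ := hcog A x hx0
  obtain ⟨ψ, rfl⟩ := hf φ
  apply hφ
  simp only [LinearMap.lcomp_apply]
  rw [show f x = 0 from hxk, map_zero]

theorem naturality (f : A →ₗ[R] B) (x : A) :
    LinearMap.lcomp R D (LinearMap.lcomp R D f) (LinearMap.applyₗ x) = LinearMap.applyₗ (f x) := by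
  ext ψ; rfl

theorem dual_bij (f : A →ₗ[R] B) (hf : Function.Bijective f) :
    Function.Bijective (LinearMap.lcomp R D f) := by
  refine ⟨dual_inj f hf.2, fun α => ?_⟩
  let e := LinearEquiv.ofBijective f hf
  refine ⟨α ∘ₗ e.symm.toLinearMap, ?_⟩
  ext b
  show α (e.symm (f b)) = α b
  rw [show f b = e b from rfl, e.symm_apply_apply]

variable {F : Type u} [AddCommGroup F] [Module R F]

theorem dual_injective_of_flat (hDi : Module.Injective R D) (hF : Module.Flat R F) :
    Module.Injective R (F →ₗ[R] D) := by
  apply Module.Baer.injective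
  intro I f
  have hinj : Function.Injective (LinearMap.rTensor F I.subtype) :=
    Module.Flat.rTensor_preserves_injective_linearMap I.subtype Subtype.val_injective
  obtain ⟨gt, hgt⟩ := hDi.out _ hinj (TensorProduct.lift f)
  refine ⟨TensorProduct.curry gt, fun x mem => ?_⟩
  ext y
  have : (x ⊗ₜ[R] y : R ⊗[R] F) = LinearMap.rTensor F I.subtype (⟨x, mem⟩ ⊗ₜ[R] y) := by
    simp
  show gt (x ⊗ₜ[R] y) = f ⟨x, mem⟩ y
  rw [this, hgt]
  rfl

theorem flat_of_dual_injective (hcog : SepPoints R D)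
    (hdual : Module.Injective R (F →ₗ[R] D)) : Module.Flat R F := by
  rw [Module.Flat.iff_rTensor_injective']
  intro I
  rw [injective_iff_map_eq_zero]
  intro z hz
  by_contra hz0
  obtain ⟨φ, hφ⟩ := hcog (↥I ⊗[R] F) z hz0
  obtain ⟨ψ, hψ⟩ := hdual.out I.subtype Subtype.val_injective (TensorProduct.curry φ)
  have key : TensorProduct.lift ψ ∘ₗ LinearMap.rTensor F I.subtype = φ := by
    apply TensorProduct.ext'
    intro x y
    simp only [LinearMap.comp_apply, LinearMap.rTensor_tmul, TensorProduct.lift.tmul]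
    rw [hψ x]
    rfl
  apply hφ
  rw [← key]
  simp [hz]

end MatlisAux

section DSum

open MatlisAux LinearMap

variable (En : MaximalSpectrum R → Type u) [∀ 𝔫, AddCommGroup (En 𝔫)] [∀ 𝔫, Module R (En 𝔫)]

theorem MatlisAux.dsum_cogen
    (j : ∀ 𝔫 : MaximalSpectrum R, (R ⧸ 𝔫.asIdeal) →ₗ[R] En 𝔫)
    (hj : ∀ 𝔫, IsInjectiveEnvelope R (j 𝔫)) :
    SepPoints R (⨁ 𝔫, En 𝔫) := by
  classical
  intro N _ _ x hx
  set ψ := LinearMap.toSpanSingleton R N x with hψdef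
  have hψ1 : ψ 1 = x := by simp [hψdef]
  have hker : LinearMap.ker ψ ≠ ⊤ := by
    intro h
    apply hx
    have : (1 : R) ∈ LinearMap.ker ψ := h ▸ Submodule.mem_top
    simpa [hψ1] using this
  obtain ⟨𝔪, h𝔪max, h𝔪⟩ := Ideal.exists_le_maximal _ hker
  set 𝔫 : MaximalSpectrum R := ⟨𝔪, h𝔪max⟩ with h𝔫def
  have hle : LinearMap.ker ψ ≤ Submodule.comap (LinearMap.id : R →ₗ[R] R) 𝔫.asIdeal := h𝔪
  let m : (R ⧸ LinearMap.ker ψ) →ₗ[R] (R ⧸ 𝔫.asIdeal) := Submodule.mapQ _ _ LinearMap.id hle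
  let e := ψ.quotKerEquivRange
  let β : ↥(LinearMap.range ψ) →ₗ[R] En 𝔫 := (j 𝔫) ∘ₗ m ∘ₗ e.symm.toLinearMap
  obtain ⟨β', hβ'⟩ := (hj 𝔫).1.out (LinearMap.range ψ).subtype Subtype.val_injective β
  refine ⟨(DirectSum.lof R _ En 𝔫) ∘ₗ β', ?_⟩
  have hx' : x ∈ LinearMap.range ψ := ⟨1, hψ1⟩
  have h1 : β' x = β ⟨x, hx'⟩ := hβ' ⟨x, hx'⟩
  have he : e.symm ⟨x, hx'⟩ = Submodule.Quotient.mk 1 := by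
    apply e.injective
    rw [e.apply_symm_apply]
    ext
    rw [show ((e (Submodule.Quotient.mk 1) : ↥(LinearMap.range ψ)) : N) = ψ 1 from
      ψ.quotKerEquivRange_apply_mk 1, hψ1]
  have hβval : β ⟨x, hx'⟩ = j 𝔫 (Submodule.Quotient.mk 1) := by
    show j 𝔫 (m (e.symm ⟨x, hx'⟩)) = _
    rw [he]
    congr 1
  have hne : β' x ≠ 0 := by
    rw [h1, hβval]
    intro h0
    have hmk : (Submodule.Quotient.mk 1 : R ⧸ 𝔫.asIdeal) = 0 := by
      apply (hj 𝔫).2.1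
      rw [h0, map_zero]
    have : (1 : R) ∈ 𝔫.asIdeal := (Submodule.Quotient.mk_eq_zero _).mp hmk
    exact h𝔪max.ne_top ((Ideal.eq_top_iff_one _).mpr this)
  intro h0
  apply hne
  have hlof : DirectSum.lof R (MaximalSpectrum R) En 𝔫 (β' x) = 0 := h0
  have := congrArg (DirectSum.component R (MaximalSpectrum R) En 𝔫) hlof
  rwa [DirectSum.component.lof_self, map_zero] at this

theorem MatlisAux.dsum_injective [IsNoetherianRing R]
    (hEn : ∀ 𝔫, Module.Injective R (En 𝔫)) :
    Module.Injective R (⨁ 𝔫, En 𝔫) := by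
  classical
  apply Module.Baer.injective
  intro I f
  have hfin : Module.Finite R ↥I := Module.Finite.iff_fg.mpr (IsNoetherian.noetherian I)
  obtain ⟨s, hs⟩ := hfin.fg_top
  set T : Finset (MaximalSpectrum R) := s.biUnion (fun y => (f y).support) with hT
  have hsupp : ∀ y : ↥I, (f y).support ⊆ T := by
    let P : Submodule R (⨁ 𝔫, En 𝔫) :=
      { carrier := {d | ∀ 𝔫, d 𝔫 ≠ 0 → 𝔫 ∈ T}
        add_mem' := by
          intro a b ha hb 𝔫 h𝔫
          by_contra h
          exact h𝔫 (by
            have ha' : a 𝔫 = 0 := by by_contra h'; exact h (ha 𝔫 h')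
            have hb' : b 𝔫 = 0 := by by_contra h'; exact h (hb 𝔫 h')
            simp [DirectSum.add_apply, ha', hb'])
        zero_mem' := by intro 𝔫 h𝔫; simp at h𝔫
        smul_mem' := by
          intro r d hd 𝔫 h𝔫
          apply hd
          intro h'
          apply h𝔫
          have : (r • d) 𝔫 = r • d 𝔫 := rfl
          rw [this, h', smul_zero] }
    have hrange : LinearMap.range f ≤ P := by
      rw [LinearMap.range_eq_map, ← hs, Submodule.map_span, Submodule.span_le]
      rintro d ⟨y, hy, rfl⟩
      intro 𝔫 h𝔫
      exact Finset.mem_biUnion.mpr ⟨y, hy, DFinsupp.mem_support_iff.mpr h𝔫⟩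
    intro y
    intro 𝔫 h𝔫
    exact hrange (LinearMap.mem_range_self f y) 𝔫 (DFinsupp.mem_support_iff.mp h𝔫)
  have hB : ∀ 𝔫, ∃ g' : R →ₗ[R] En 𝔫, ∀ (x : R) (mem : x ∈ I),
      g' x = (DirectSum.component R _ En 𝔫) (f ⟨x, mem⟩) :=
    fun 𝔫 => Module.Baer.of_injective (hEn 𝔫) I ((DirectSum.component R _ En 𝔫) ∘ₗ f)
  choose g hg using hB
  refine ⟨∑ 𝔫 ∈ T, (DirectSum.lof R _ En 𝔫) ∘ₗ g 𝔫, fun x mem => ?_⟩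
  rw [LinearMap.sum_apply]
  have step : ∀ 𝔫 ∈ T, ((DirectSum.lof R _ En 𝔫) ∘ₗ g 𝔫) x
      = DirectSum.of En 𝔫 ((f ⟨x, mem⟩) 𝔫) := by
    intro 𝔫 _
    simp only [LinearMap.comp_apply, hg 𝔫 x mem]
    rfl
  rw [Finset.sum_congr rfl step]
  rw [← Finset.sum_subset (hsupp ⟨x, mem⟩) (fun 𝔫 _ h𝔫 => by
    rw [DFinsupp.notMem_support_iff.mp h𝔫, map_zero])]
  exact DirectSum.sum_support_of (f ⟨x, mem⟩)

end DSum

open LinearMap MatlisAux in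
/-- Over a commutative Noetherian ring, if `F` is Matlis reflexive,
then `p : F → M` is a flat cover iff the Matlis dual `p^∨ : M^∨ → F^∨` is an
injective envelope.  Here the Matlis dualizing module `⊕ E(R/𝔫)` is presented by a
family `En 𝔫` of injective envelopes `j 𝔫 : R/𝔫 → En 𝔫` of the residue fields of the
maximal ideals `𝔫` of `R`. -/
theorem flatCover_iff_matlisDual_injectiveEnvelope [IsNoetherianRing R]
    (En : MaximalSpectrum R → Type u) [∀ 𝔫, AddCommGroup (En 𝔫)] [∀ 𝔫, Module R (En 𝔫)]
    (j : ∀ 𝔫 : MaximalSpectrum R, (R ⧸ 𝔫.asIdeal) →ₗ[R] En 𝔫)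
    (hj : ∀ 𝔫, IsInjectiveEnvelope R (j 𝔫))
    {F M : Type u} [AddCommGroup F] [AddCommGroup M] [Module R F] [Module R M]
    (hF : IsMatlisReflexive R (⨁ 𝔫, En 𝔫) F) (p : F →ₗ[R] M) :
    IsFlatCover R p ↔ IsInjectiveEnvelope R (LinearMap.lcomp R (⨁ 𝔫, En 𝔫) p) := by
  set D := ⨁ 𝔫, En 𝔫 with hD
  have hDi : Module.Injective R D := MatlisAux.dsum_injective R En (fun 𝔫 => (hj 𝔫).1)
  have hcog : SepPoints R D := MatlisAux.dsum_cogen R En j hj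
  have hFbij : Function.Bijective (LinearMap.applyₗ : F →ₗ[R] ((F →ₗ[R] D) →ₗ[R] D)) := hF
  let εF := LinearEquiv.ofBijective _ hFbij
  constructor
  · rintro ⟨⟨hflat, hpre⟩, hcov⟩
    have hFdi : Module.Injective R (F →ₗ[R] D) := dual_injective_of_flat hDi hflat
    have hpsurj : Function.Surjective p := by
      obtain ⟨h, hh⟩ := hpre (M →₀ R) inferInstance (Finsupp.linearCombination R _root_.id)
      intro m
      obtain ⟨v, hv⟩ := Finsupp.linearCombination_id_surjective R M m
      exact ⟨h v, by rw [← hv, ← hh]; rfl⟩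
    refine ⟨hFdi, dual_inj p hpsurj, ?_⟩
    intro N hN
    intro hmeet
    have hπp : Function.Injective (N.mkQ ∘ₗ lcomp R D p) := by
      rw [injective_iff_map_eq_zero]
      intro φ hφ
      have h1 : lcomp R D p φ ∈ N := (Submodule.Quotient.mk_eq_zero N).mp hφ
      have h2 : lcomp R D p φ ∈ N ⊓ LinearMap.range (lcomp R D p) :=
        ⟨h1, LinearMap.mem_range_self _ φ⟩
      rw [hmeet, Submodule.mem_bot] at h2
      have : lcomp R D p φ = lcomp R D p 0 := by rw [h2, map_zero]
      exact dual_inj p hpsurj this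
    obtain ⟨ψ, hψ⟩ := hFdi.out (N.mkQ ∘ₗ lcomp R D p) hπp (lcomp R D p)
    set Φ : (F →ₗ[R] D) →ₗ[R] (F →ₗ[R] D) := ψ ∘ₗ N.mkQ with hΦdef
    have hΦp : ∀ φ : M →ₗ[R] D, Φ (lcomp R D p φ) = lcomp R D p φ := hψ
    have hΦN : ∀ n ∈ N, Φ n = 0 := by
      intro n hn
      show ψ (N.mkQ n) = 0
      rw [show N.mkQ n = 0 from (Submodule.Quotient.mk_eq_zero N).mpr hn, map_zero]
    set h : F →ₗ[R] F := εF.symm.toLinearMap ∘ₗ (lcomp R D Φ) ∘ₗ LinearMap.applyₗ with hhdef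
    have hεh : ∀ x : F, (LinearMap.applyₗ (h x) : (F →ₗ[R] D) →ₗ[R] D)
        = lcomp R D Φ (LinearMap.applyₗ x) := by
      intro x
      show εF (h x) = _
      exact εF.apply_symm_apply _
    have hph : p ∘ₗ h = p := by
      ext x
      apply eval_inj hcog
      show (LinearMap.applyₗ (p (h x)) : (M →ₗ[R] D) →ₗ[R] D) = LinearMap.applyₗ (p x)
      rw [← naturality p (h x), ← naturality p x, hεh x]
      ext φ : 1
      show LinearMap.applyₗ x (Φ (lcomp R D p φ)) = LinearMap.applyₗ x (lcomp R D p φ)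
      rw [hΦp φ]
    have hhbij := hcov h hph
    have hsurj : Function.Surjective (lcomp R D Φ) := by
      intro Ψ
      obtain ⟨y, hy⟩ := hFbij.2 Ψ
      obtain ⟨z, hz⟩ := hhbij.2 y
      exact ⟨LinearMap.applyₗ z, by rw [← hεh z, hz, hy]⟩
    have hΦinj : Function.Injective Φ := inj_of_dual_surj hcog Φ hsurj
    obtain ⟨n, hnN, hn0⟩ := Submodule.exists_mem_ne_zero_of_ne_bot hN
    exact hn0 (hΦinj (by rw [hΦN n hnN, map_zero]))
  · rintro ⟨hEi, hdinj, hess⟩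
    have hflat : Module.Flat R F := flat_of_dual_injective hcog hEi
    refine ⟨⟨hflat, ?_⟩, ?_⟩
    · intro F' _ _ hF' g
      have hF'di : Module.Injective R (F' →ₗ[R] D) := dual_injective_of_flat hDi hF'
      obtain ⟨k, hk⟩ := hF'di.out (lcomp R D p) hdinj (lcomp R D g)
      refine ⟨εF.symm.toLinearMap ∘ₗ (lcomp R D k) ∘ₗ LinearMap.applyₗ, ?_⟩
      set h : F' →ₗ[R] F := εF.symm.toLinearMap ∘ₗ (lcomp R D k) ∘ₗ LinearMap.applyₗ with hhdef
      ext x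
      apply eval_inj hcog
      show (LinearMap.applyₗ (p (h x)) : (M →ₗ[R] D) →ₗ[R] D) = LinearMap.applyₗ (g x)
      rw [← naturality p (h x), ← naturality g x]
      have hεh : (LinearMap.applyₗ (h x) : (F →ₗ[R] D) →ₗ[R] D)
          = lcomp R D k (LinearMap.applyₗ x) := by
        show εF (h x) = _
        exact εF.apply_symm_apply _
      rw [hεh]
      ext φ : 1
      show LinearMap.applyₗ x (k (lcomp R D p φ)) = LinearMap.applyₗ x (lcomp R D g φ)
      rw [hk φ]
    · intro h hph
      have hfix : ∀ φ : M →ₗ[R] D, lcomp R D h (lcomp R D p φ) = lcomp R D p φ := by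
        intro φ
        ext y : 1
        show φ (p (h y)) = φ (p y)
        rw [show p (h y) = p y from LinearMap.congr_fun hph y]
      have hbot : LinearMap.ker (lcomp R D h) ⊓ LinearMap.range (lcomp R D p) = ⊥ := by
        rw [eq_bot_iff]
        rintro x ⟨hxk, φ, rfl⟩
        rw [Submodule.mem_bot]
        rw [← hfix φ]
        exact hxk
      have hker : LinearMap.ker (lcomp R D h) = ⊥ := by
        by_contra hne
        exact hess _ hne hbot
      have hinjv : Function.Injective (lcomp R D h) := LinearMap.ker_eq_bot.mp hker
      obtain ⟨r, hr⟩ := hEi.out (lcomp R D h) hinjv LinearMap.id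
      have hrfix : ∀ φ : M →ₗ[R] D, r (lcomp R D p φ) = lcomp R D p φ := by
        intro φ
        conv_lhs => rw [← hfix φ]
        exact hr _
      have hrbot : LinearMap.ker r ⊓ LinearMap.range (lcomp R D p) = ⊥ := by
        rw [eq_bot_iff]
        rintro x ⟨hxk, φ, rfl⟩
        rw [Submodule.mem_bot]
        rw [← hrfix φ]
        exact hxk
      have hrker : LinearMap.ker r = ⊥ := by
        by_contra hne
        exact hess _ hne hrbot
      have hrinj : Function.Injective r := LinearMap.ker_eq_bot.mp hrker
      have hvbij : Function.Bijective (lcomp R D h) :=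
        ⟨hinjv, fun φ => ⟨r φ, hrinj (hr (r φ))⟩⟩
      have hvvbij := dual_bij (D := D) (lcomp R D h) hvbij
      constructor
      · intro a b hab
        apply hFbij.1
        apply hvvbij.1
        rw [naturality h a, naturality h b, hab]
      · intro y
        obtain ⟨Ψ, hΨ⟩ := hvvbij.2 (LinearMap.applyₗ y)
        obtain ⟨x, rfl⟩ := hFbij.2 Ψ
        refine ⟨x, hFbij.1 ?_⟩
        rw [← naturality h x, hΨ]
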